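/- arXiv:2503.23703 — 3 statements merged into one kernel-verified Lean document; each statement's English description precedes it below -/
import Mathlib

section
/- A tropical linear differential equation P = min_{0≤i≤k}{a_i + u^(i)} has either infinitely many minimal tropical solutions or finitely many; it has infinitely many (i.e., is non-holonomic) if and only if {k} is a tropical solution, i.e., the minimum in min_{0≤i≤k}{a_i + k - i} is attained at least twice. -/
/-- `tval S i` = min { s - i : s ∈ S, s ≥ i }, as an extended real (⊤ if no such s). -/
noncomputable def tval (S : Set ℕ) (i : ℕ) : EReal :=
  ⨅ (d : ℕ) (_ : i + d ∈ S), ((d : ℝ) : EReal)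

/-- The term `a_i + val_S(i)` of the tropical linear differential equation. -/
noncomputable def tterm (a : ℕ → ℤ) (S : Set ℕ) (i : ℕ) : EReal :=
  ((a i : ℝ) : EReal) + tval S i

/-- `min_{0 ≤ i ≤ k} { a_i + val_S(i) }`. -/
noncomputable def tmin (k : ℕ) (a : ℕ → ℤ) (S : Set ℕ) : EReal :=
  ⨅ i ∈ Finset.range (k + 1), tterm a S i

/-- `S` is a tropical solution: the minimum is attained at least twice
(this also covers the case where the minimum is `∞`, since `k ≥ 1`). -/
def IsSol (k : ℕ) (a : ℕ → ℤ) (S : Set ℕ) : Prop :=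
  ∃ i ∈ Finset.range (k + 1), ∃ j ∈ Finset.range (k + 1),
    i ≠ j ∧ tterm a S i = tmin k a S ∧ tterm a S j = tmin k a S

/-- A minimal tropical solution: nonempty, a solution, and no nonempty proper
subset is a solution. -/
def IsMinSol (k : ℕ) (a : ℕ → ℤ) (S : Set ℕ) : Prop :=
  S.Nonempty ∧ IsSol k a S ∧ ∀ T ⊆ S, T.Nonempty → IsSol k a T → T = S

lemma tval_nonneg (S : Set ℕ) (i : ℕ) : 0 ≤ tval S i :=
  le_iInf₂ fun d _ => by exact_mod_cast EReal.coe_nonneg.2 (Nat.cast_nonneg d)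

lemma tval_le {S : Set ℕ} {i d : ℕ} (h : i + d ∈ S) : tval S i ≤ ((d : ℝ) : EReal) :=
  iInf_le_of_le d (iInf_le _ h)

lemma le_tval {S : Set ℕ} {i : ℕ} {x : EReal} (h : ∀ d, i + d ∈ S → x ≤ ((d : ℝ) : EReal)) :
    x ≤ tval S i := le_iInf₂ h

lemma tval_self {S : Set ℕ} {p : ℕ} (h : p ∈ S) : tval S p = 0 := by
  refine le_antisymm ?_ (tval_nonneg _ _)
  have := tval_le (show p + 0 ∈ S by simpa using h)
  simpa using this

lemma tval_anti {S T : Set ℕ} (h : T ⊆ S) (i : ℕ) : tval S i ≤ tval T i :=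
  le_tval fun d hd => tval_le (h hd)

lemma tval_eq_of_min {S : Set ℕ} {m i : ℕ} (hm : m ∈ S) (him : i ≤ m)
    (hmin : ∀ x ∈ S, i ≤ x → m ≤ x) : tval S i = (((m - i : ℕ) : ℝ) : EReal) := by
  refine le_antisymm (tval_le (show i + (m - i) ∈ S by rwa [Nat.add_sub_cancel' him])) ?_
  refine le_tval fun d hd => ?_
  have h1 : m ≤ i + d := hmin _ hd (Nat.le_add_right _ _)
  exact EReal.coe_le_coe_iff.2 (by exact_mod_cast Nat.sub_le_iff_le_add'.2 (by omega))

lemma tval_inter_Iic {S : Set ℕ} {m i X : ℕ} (hm : m ∈ S) (him : i ≤ m) (hmX : m ≤ X) :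
    tval (S ∩ Set.Iic X) i = tval S i := by
  refine le_antisymm (le_tval fun d hd => ?_) (tval_anti Set.inter_subset_left i)
  by_cases hdX : i + d ≤ X
  · exact tval_le ⟨hd, hdX⟩
  · calc tval (S ∩ Set.Iic X) i ≤ (((m - i : ℕ) : ℝ) : EReal) :=
          tval_le (show i + (m - i) ∈ S ∩ Set.Iic X by
            rw [Nat.add_sub_cancel' him]; exact ⟨hm, hmX⟩)
    _ ≤ ((d : ℝ) : EReal) := EReal.coe_le_coe_iff.2 (by exact_mod_cast by omega)

lemma tterm_anti (a : ℕ → ℤ) {T S : Set ℕ} (h : T ⊆ S) (i : ℕ) :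
    tterm a S i ≤ tterm a T i := add_le_add_right (tval_anti h i) _

lemma tmin_le {k : ℕ} {a : ℕ → ℤ} {S : Set ℕ} {i : ℕ} (hi : i ∈ Finset.range (k + 1)) :
    tmin k a S ≤ tterm a S i := iInf₂_le i hi

lemma tterm_eq_tmin_iff {k : ℕ} {a : ℕ → ℤ} {S : Set ℕ} {i : ℕ}
    (hi : i ∈ Finset.range (k + 1)) :
    tterm a S i = tmin k a S ↔ ∀ j ∈ Finset.range (k + 1), tterm a S i ≤ tterm a S j := by
  constructor
  · intro h j hj; rw [h]; exact tmin_le hj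
  · intro h; exact le_antisymm (le_iInf₂ h) (tmin_le hi)

lemma isSol_congr {k : ℕ} {a : ℕ → ℤ} {S T : Set ℕ}
    (h : ∀ i ∈ Finset.range (k + 1), tterm a S i = tterm a T i) :
    IsSol k a S ↔ IsSol k a T := by
  have hmin : tmin k a S = tmin k a T := by
    unfold tmin
    exact iInf_congr fun i => iInf_congr_Prop Iff.rfl fun hi => h i hi
  constructor
  · rintro ⟨i, hi, j, hj, hij, h1, h2⟩
    exact ⟨i, hi, j, hj, hij, by rw [← h i hi, ← hmin]; exact h1,
      by rw [← h j hj, ← hmin]; exact h2⟩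
  · rintro ⟨i, hi, j, hj, hij, h1, h2⟩
    exact ⟨i, hi, j, hj, hij, by rw [h i hi, hmin]; exact h1,
      by rw [h j hj, hmin]; exact h2⟩

lemma tterm_singleton {a : ℕ → ℤ} {m i : ℕ} (him : i ≤ m) :
    tterm a {m} i = (((a i + m - i : ℤ) : ℝ) : EReal) := by
  have : tval {m} i = (((m - i : ℕ) : ℝ) : EReal) :=
    tval_eq_of_min rfl him (by rintro x rfl _; exact le_rfl)
  rw [tterm, this, ← EReal.coe_add]
  congr 1
  push_cast [him]
  ring

lemma tterm_singleton_le_iff {a : ℕ → ℤ} {m k i l : ℕ} (hm : k ≤ m)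
    (hi : i ∈ Finset.range (k + 1)) (hl : l ∈ Finset.range (k + 1)) :
    tterm a {m} i ≤ tterm a {m} l ↔ a i - i ≤ a l - l := by
  rw [Finset.mem_range] at hi hl
  rw [tterm_singleton (by omega), tterm_singleton (by omega),
    EReal.coe_le_coe_iff, Int.cast_le]
  omega

lemma isSol_singleton_iff {k m : ℕ} (hm : k ≤ m) (a : ℕ → ℤ) :
    IsSol k a {m} ↔ ∃ i ∈ Finset.range (k + 1), ∃ j ∈ Finset.range (k + 1),
      i ≠ j ∧ (∀ l ∈ Finset.range (k + 1), a i - i ≤ a l - l) ∧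
        (∀ l ∈ Finset.range (k + 1), a j - j ≤ a l - l) := by
  unfold IsSol
  refine exists_congr fun i => and_congr_right fun hi => exists_congr fun j =>
    and_congr_right fun hj => and_congr_right fun hij => ?_
  rw [tterm_eq_tmin_iff hi, tterm_eq_tmin_iff hj]
  exact and_congr (forall₂_congr fun l hl => tterm_singleton_le_iff hm hi hl)
    (forall₂_congr fun l hl => tterm_singleton_le_iff hm hj hl)

lemma isSol_singleton_shift {k m : ℕ} (hm : k ≤ m) {a : ℕ → ℤ}
    (h : IsSol k a {k}) : IsSol k a {m} :=
  (isSol_singleton_iff hm a).2 ((isSol_singleton_iff le_rfl a).1 h)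

lemma minSol_bound {k : ℕ} {a : ℕ → ℤ} (hns : ¬ IsSol k a {k})
    {S : Set ℕ} (hS : IsMinSol k a S) {s : ℕ} (hs : s ∈ S) :
    s < k ∨ ∃ p ∈ Finset.range (k + 1), ∃ j ∈ Finset.range (k + 1),
      (s : ℤ) ≤ a p - a j + j := by
  classical
  obtain ⟨hne, hsol, hminimal⟩ := hS
  by_cases hsk : s < k
  · exact Or.inl hsk
  push_neg at hsk
  right
  -- m : least element of S
  have hexm : ∃ n, n ∈ S := hne
  set m := Nat.find hexm with hmdef
  have hmS : m ∈ S := Nat.find_spec hexm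
  have hmmin : ∀ x ∈ S, m ≤ x := fun x hx => Nat.find_min' hexm hx
  -- m < k, else S ↔ {m} solution ↔ {k} solution
  have hmk : m < k := by
    by_contra hmk
    push_neg at hmk
    apply hns
    apply (isSol_singleton_iff le_rfl a).2
    apply (isSol_singleton_iff hmk a).1
    apply (isSol_congr (T := {m}) ?_).1 hsol
    intro i hi
    rw [Finset.mem_range] at hi
    have him : i ≤ m := by omega
    rw [tterm_singleton him, tterm, tval_eq_of_min hmS him (fun x hx _ => hmmin x hx),
      ← EReal.coe_add]
    congr 1
    push_cast [him]
    ring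
  -- q : least element of S that is ≥ k
  have hexq : ∃ n, n ∈ S ∧ k ≤ n := ⟨s, hs, hsk⟩
  obtain ⟨q, hqS, hkq, hqmin⟩ : ∃ q, q ∈ S ∧ k ≤ q ∧ ∀ x, x ∈ S ∧ k ≤ x → q ≤ x :=
    ⟨Nat.find hexq, (Nat.find_spec hexq).1, (Nat.find_spec hexq).2,
      fun x hx => Nat.find_min' hexq hx⟩
  -- S ⊆ Iic q via minimality
  have hSq : S = S ∩ Set.Iic q := by
    refine (hminimal (S ∩ Set.Iic q) Set.inter_subset_left ⟨q, hqS, Set.mem_Iic.2 le_rfl⟩ ?_).symm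
    refine (isSol_congr fun i hi => ?_).2 hsol
    rw [Finset.mem_range] at hi
    unfold tterm
    rw [tval_inter_Iic hqS (by omega) le_rfl]
  have hsq : s = q := le_antisymm (by rw [hSq] at hs; exact hs.2) (hqmin s ⟨hs, hsk⟩)
  subst hsq
  -- p : greatest element of S below k
  have hFfin : (S ∩ Set.Iio k).Finite := (Set.finite_Iio k).subset Set.inter_subset_right
  have hFne : hFfin.toFinset.Nonempty := ⟨m, by simp [hFfin.mem_toFinset]; exact ⟨hmS, hmk⟩⟩
  set p := hFfin.toFinset.max' hFne with hpdef
  have hpF : p ∈ S ∩ Set.Iio k := hFfin.mem_toFinset.1 (hFfin.toFinset.max'_mem hFne)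
  have hpS : p ∈ S := hpF.1
  have hpk : p < k := hpF.2
  have hpmax : ∀ x ∈ S, x < k → x ≤ p := fun x hx hxk =>
    hFfin.toFinset.le_max' x (hFfin.mem_toFinset.2 ⟨hx, hxk⟩)
  -- elements of S are ≤ p or = s
  have helem : ∀ x ∈ S, x ≤ p ∨ x = s := by
    intro x hx
    by_cases hxk : x < k
    · exact Or.inl (hpmax x hx hxk)
    · right
      have h1 : s ≤ x := hqmin x ⟨hx, by omega⟩
      have h2 : x ≤ s := by rw [hSq] at hx; exact hx.2
      omega
  -- F = S ∩ Iic p; tval F i = tval S i for i ≤ p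
  set F := S ∩ Set.Iic p with hFdef
  have hpFmem : p ∈ F := ⟨hpS, Set.mem_Iic.2 le_rfl⟩
  have htvalF : ∀ i ≤ p, tval F i = tval S i := fun i hip =>
    tval_inter_Iic hpS hip le_rfl
  have hsnF : s ∉ F := fun hsF => by have := Set.mem_Iic.1 hsF.2; omega
  -- F is not a solution
  have hFnotsol : ¬ IsSol k a F := by
    intro hF
    exact hsnF ((hminimal F Set.inter_subset_left ⟨p, hpFmem⟩ hF) ▸ hs)
  -- get a minimizer j with p < j
  obtain ⟨i, hi, j, hj, hij, h1, h2⟩ := hsol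
  have hkey : ∃ j ∈ Finset.range (k + 1), p < j ∧ tterm a S j = tmin k a S := by
    by_contra hcon
    push_neg at hcon
    have hip : i ≤ p := by
      by_contra h; push_neg at h; exact absurd h1 (fun hh => by
        have := hcon i hi h; exact this hh)
    have hjp : j ≤ p := by
      by_contra h; push_neg at h; exact absurd h2 (fun hh => by
        have := hcon j hj h; exact this hh)
    apply hFnotsol
    refine ⟨i, hi, j, hj, hij, ?_, ?_⟩
    · rw [tterm_eq_tmin_iff hi]
      intro l hl
      calc tterm a F i = tterm a S i := by unfold tterm; rw [htvalF i hip]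
        _ = tmin k a S := h1
        _ ≤ tterm a S l := tmin_le hl
        _ ≤ tterm a F l := tterm_anti a Set.inter_subset_left l
    · rw [tterm_eq_tmin_iff hj]
      intro l hl
      calc tterm a F j = tterm a S j := by unfold tterm; rw [htvalF j hjp]
        _ = tmin k a S := h2
        _ ≤ tterm a S l := tmin_le hl
        _ ≤ tterm a F l := tterm_anti a Set.inter_subset_left l
  obtain ⟨j', hj', hpj', hmin'⟩ := hkey
  rw [Finset.mem_range] at hj'
  -- tval S j' = s - j'
  have hminel : ∀ x ∈ S, j' ≤ x → s ≤ x := by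
    intro x hx hjx
    rcases helem x hx with h | h
    · omega
    · omega
  have htv : tval S j' = (((s - j' : ℕ) : ℝ) : EReal) :=
    tval_eq_of_min hs (by omega) hminel
  -- conclude
  refine ⟨p, by simp [Finset.mem_range]; omega, j', by simp [Finset.mem_range]; omega, ?_⟩
  have hle : tterm a S j' ≤ tterm a S p := by
    rw [hmin']
    exact tmin_le (by simp [Finset.mem_range]; omega)
  rw [tterm, htv, tterm, tval_self hpS] at hle
  have hc : (((a j' + s - j' : ℤ) : ℝ) : EReal) ≤ (((a p : ℤ) : ℝ) : EReal) := by
    calc (((a j' + s - j' : ℤ) : ℝ) : EReal) = ((a j' : ℝ) : EReal) + (((s - j' : ℕ) : ℝ) : EReal) := by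
          rw [← EReal.coe_add]; congr 1; push_cast [show j' ≤ s by omega]; ring
      _ ≤ ((a p : ℝ) : EReal) + 0 := hle
      _ = (((a p : ℤ) : ℝ) : EReal) := by rw [add_zero]
  rw [EReal.coe_le_coe_iff, Int.cast_le] at hc
  omega


/-- the equation has infinitely many minimal tropical solutions
(is non-holonomic) iff `{k}` is a tropical solution. -/
theorem stmt5 (k : ℕ) (hk : 1 ≤ k) (a : ℕ → ℤ) :
    {S : Set ℕ | IsMinSol k a S}.Infinite ↔ IsSol k a {k} := by
  constructor
  · intro hinf
    by_contra hns
    refine hinf ?_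
    have hne : (Finset.range (k + 1)).Nonempty := ⟨0, by simp⟩
    set M : ℤ := (Finset.range (k + 1)).sup' hne a with hM
    set c : ℤ := (Finset.range (k + 1)).inf' hne (fun l => a l - l) with hc
    refine Set.Finite.subset (Set.finite_Iic (k + (M - c).toNat)).finite_subsets ?_
    intro S hS x hx
    rcases minSol_bound hns hS hx with h | ⟨p, hp, j, hj, hle⟩
    · exact Set.mem_Iic.2 (by omega)
    · have h1 : a p ≤ M := Finset.le_sup' a hp
      have h2 : c ≤ a j - j := Finset.inf'_le _ hj
      have hj2 : (j : ℤ) ≤ k := by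
        rw [Finset.mem_range] at hj
        exact_mod_cast Nat.lt_succ_iff.1 hj
      have h3 := Int.self_le_toNat (M - c)
      have h4 : (x : ℤ) ≤ (k : ℤ) + ((M - c).toNat : ℤ) := by omega
      exact Set.mem_Iic.2 (by exact_mod_cast h4)
  · intro hsol
    apply Set.infinite_of_injective_forall_mem
      (f := fun n : ℕ => ({k + n} : Set ℕ))
    · intro n m h
      have := Set.singleton_eq_singleton_iff.1 h
      omega
    · intro n
      refine ⟨⟨k + n, rfl⟩, isSol_singleton_shift (Nat.le_add_right k n) hsol, ?_⟩
      intro T hT hTne _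
      exact (Set.subset_singleton_iff_eq.1 hT).resolve_left hTne.ne_empty
end

section
/- Every tropical linear differential equation P = min_{0≤i≤k}{a_i + u^(i)} has either a nonempty tropical solution or a nonempty tropical solution at infinity. -/
/-- `val_S^∞(i)`: `max S` for `i = 0`, and `max { s - i : s ∈ S, s ≤ -1 }` for
`i ≥ 1` (with `-∞` if no such `s` exists). -/
noncomputable def tvalInf (S : Set ℤ) (i : ℕ) : EReal :=
  if i = 0 then ⨆ (s : ℤ) (_ : s ∈ S), ((s : ℝ) : EReal)
  else ⨆ (s : ℤ) (_ : s ∈ S ∧ s ≤ -1), (((s : ℝ) - (i : ℝ)) : EReal)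

/-- The term `a_i + val_S^∞(i)`. -/
noncomputable def ttermInf (a : ℕ → ℤ) (S : Set ℤ) (i : ℕ) : EReal :=
  ((a i : ℝ) : EReal) + tvalInf S i

/-- `max_{0 ≤ i ≤ k} { a_i + val_S^∞(i) }`. -/
noncomputable def tmax (k : ℕ) (a : ℕ → ℤ) (S : Set ℤ) : EReal :=
  ⨆ i ∈ Finset.range (k + 1), ttermInf a S i

/-- `S ⊆ ℤ≤0` is a tropical solution at infinity: the maximum is attained for at
least two values of `i`. -/
def IsSolInf (k : ℕ) (a : ℕ → ℤ) (S : Set ℤ) : Prop :=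
  ∃ i ∈ Finset.range (k + 1), ∃ j ∈ Finset.range (k + 1),
    i ≠ j ∧ ttermInf a S i = tmax k a S ∧ ttermInf a S j = tmax k a S

lemma tval_eq (S : Set ℕ) (i d0 : ℕ) (h0 : i + d0 ∈ S)
    (hmin : ∀ d, i + d ∈ S → d0 ≤ d) : tval S i = ((d0 : ℝ) : EReal) := by
  unfold tval
  refine le_antisymm (iInf_le_of_le d0 (iInf_le_of_le h0 le_rfl)) (le_iInf fun d => le_iInf fun hd => ?_)
  have h := hmin d hd
  exact_mod_cast h

lemma tval_top (S : Set ℕ) (i : ℕ) (h : ∀ d, i + d ∉ S) : tval S i = ⊤ := by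
  simp [tval, h]

lemma tmin_eq {k : ℕ} {a : ℕ → ℤ} {S : Set ℕ} {v : EReal} (i0 : ℕ)
    (hi0 : i0 ∈ Finset.range (k+1)) (h0 : tterm a S i0 = v)
    (hall : ∀ i ∈ Finset.range (k+1), v ≤ tterm a S i) : tmin k a S = v := by
  unfold tmin
  refine le_antisymm ?_ (le_iInf fun i => le_iInf fun hi => hall i hi)
  calc (⨅ i ∈ Finset.range (k+1), tterm a S i) ≤ tterm a S i0 :=
        iInf_le_of_le i0 (iInf_le_of_le hi0 le_rfl)
  _ = v := h0

lemma tmax_eq {k : ℕ} {a : ℕ → ℤ} {S : Set ℤ} {v : EReal} (i0 : ℕ)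
    (hi0 : i0 ∈ Finset.range (k+1)) (h0 : ttermInf a S i0 = v)
    (hall : ∀ i ∈ Finset.range (k+1), ttermInf a S i ≤ v) : tmax k a S = v := by
  unfold tmax
  refine le_antisymm (iSup_le fun i => iSup_le fun hi => hall i hi) ?_
  calc v = ttermInf a S i0 := h0.symm
  _ ≤ _ := le_iSup_of_le i0 (le_iSup_of_le (f := fun _ : i0 ∈ Finset.range (k+1) => ttermInf a S i0) hi0 le_rfl)

lemma tvalInf_zero (S : Set ℤ) (s0 : ℤ) (h0 : s0 ∈ S) (hmax : ∀ s ∈ S, s ≤ s0) :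
    tvalInf S 0 = ((s0 : ℝ) : EReal) := by
  unfold tvalInf
  rw [if_pos rfl]
  refine le_antisymm (iSup_le fun s => iSup_le fun hs => ?_) (le_iSup_of_le s0 (le_iSup_of_le h0 le_rfl))
  exact_mod_cast hmax s hs

lemma tvalInf_pos (S : Set ℤ) (i : ℕ) (hi : i ≠ 0) (s0 : ℤ) (h0 : s0 ∈ S) (h1 : s0 ≤ -1)
    (hmax : ∀ s ∈ S, s ≤ -1 → s ≤ s0) :
    tvalInf S i = (((s0 : ℝ) - (i : ℝ)) : EReal) := by
  unfold tvalInf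
  rw [if_neg hi]
  refine le_antisymm (iSup_le fun s => iSup_le fun hs => ?_) (le_iSup_of_le s0 (le_iSup_of_le ⟨h0, h1⟩ le_rfl))
  have h := hmax s hs.1 hs.2
  have h2 : (s:ℝ) - i ≤ (s0:ℝ) - i := by
    have : (s:ℝ) ≤ (s0:ℝ) := by exact_mod_cast h
    linarith
  exact_mod_cast h2
lemma crossing (k : ℕ) (hk : 1 ≤ k) (a : ℕ → ℤ) (hA : a 1 ≤ a 0) :
    ∃ t : ℕ, 1 ≤ t ∧
      (∀ i : ℕ, 1 ≤ i → i ≤ t → i ≤ k → a 0 ≤ a i + (t : ℤ) - (i : ℤ)) ∧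
      ∃ j : ℕ, 1 ≤ j ∧ j ≤ t ∧ j ≤ k ∧ a j + (t : ℤ) - (j : ℤ) = a 0 := by
  classical
  have hex : ∃ t : ℕ, 1 ≤ t ∧ ∀ i : ℕ, 1 ≤ i → i ≤ t → i ≤ k →
      a 0 ≤ a i + (t : ℤ) - (i : ℤ) := by
    refine ⟨(Finset.Icc 1 k).sup (fun i => (a 0 - a i + i).toNat) + 1,
      Nat.le_add_left 1 _, fun i h1 _ h3 => ?_⟩
    have hm : i ∈ Finset.Icc 1 k := Finset.mem_Icc.2 ⟨h1, h3⟩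
    have hs : (a 0 - a i + (i:ℤ)).toNat ≤
        (Finset.Icc 1 k).sup (fun i => (a 0 - a i + i).toNat) := by
      simpa using Finset.le_sup (f := fun i : ℕ => (a 0 - a i + (i:ℤ)).toNat) hm
    have ht1 : a 0 - a i + i ≤ ((a 0 - a i + (i:ℤ)).toNat : ℤ) := Int.self_le_toNat _
    omega
  refine ⟨Nat.find hex, (Nat.find_spec hex).1, (Nat.find_spec hex).2, ?_⟩
  obtain ⟨ht1, hQ⟩ := Nat.find_spec hex
  rcases eq_or_lt_of_le ht1 with h | h
  · have hQ1 := hQ 1 le_rfl (by omega) hk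
    refine ⟨1, le_rfl, by omega, hk, ?_⟩
    rw [← h] at hQ1 ⊢
    push_cast at hQ1 ⊢
    omega
  · have hnot := Nat.find_min hex (m := Nat.find hex - 1) (by omega)
    push_neg at hnot
    obtain ⟨i, h1, h2, h3, h4⟩ := hnot (by omega)
    have hcast : ((Nat.find hex - 1 : ℕ) : ℤ) = ((Nat.find hex : ℕ) : ℤ) - 1 := by omega
    rw [hcast] at h4
    refine ⟨i, h1, by omega, h3, le_antisymm (by omega) (hQ i h1 (by omega) h3)⟩
/-- every TLDE has either a nonempty tropical solution or a
nonempty tropical solution at infinity. -/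
theorem stmt9 (k : ℕ) (hk : 1 ≤ k) (a : ℕ → ℤ) :
    (∃ S : Set ℕ, S.Nonempty ∧ IsSol k a S) ∨
      (∃ S : Set ℤ, S.Nonempty ∧ (∀ s ∈ S, s ≤ 0) ∧ IsSolInf k a S) := by
  classical
  by_cases hA : a 1 ≤ a 0
  · -- finite solution S = {0, t}
    left
    obtain ⟨t, ht1, hQ, j, hj1, hjt, hjk, hjeq⟩ := crossing k hk a hA
    set S : Set ℕ := {0, t} with hS
    have h0S : (0 : ℕ) ∈ S := Or.inl rfl
    have htS : t ∈ S := Or.inr rfl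
    have hv0 : tval S 0 = (((0 : ℕ) : ℝ) : EReal) :=
      tval_eq S 0 0 h0S (fun d _ => Nat.zero_le d)
    have hvi : ∀ i, 1 ≤ i → i ≤ t → tval S i = (((t - i : ℕ) : ℝ) : EReal) := by
      intro i h1 h2
      apply tval_eq
      · show i + (t - i) ∈ S
        have he : i + (t - i) = t := by omega
        rw [he]; exact htS
      · intro d hd
        simp only [hS, Set.mem_insert_iff, Set.mem_singleton_iff] at hd
        omega
    have hvtop : ∀ i, t < i → tval S i = ⊤ := by
      intro i h
      apply tval_top
      intro d hd
      simp only [hS, Set.mem_insert_iff, Set.mem_singleton_iff] at hd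
      omega
    have ht0 : tterm a S 0 = (((a 0 : ℤ) : ℝ) : EReal) := by
      rw [tterm, hv0, ← EReal.coe_add]
      congr 1
      push_cast
      ring
    have hti : ∀ i, 1 ≤ i → i ≤ t →
        tterm a S i = (((a i + (t : ℤ) - (i : ℤ) : ℤ) : ℝ) : EReal) := by
      intro i h1 h2
      rw [tterm, hvi i h1 h2, ← EReal.coe_add]
      congr 1
      push_cast [Nat.cast_sub h2]
      ring
    have httop : ∀ i, t < i → tterm a S i = ⊤ := by
      intro i h
      rw [tterm, hvtop i h]
      simp
    have hminv : tmin k a S = (((a 0 : ℤ) : ℝ) : EReal) := by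
      apply tmin_eq 0 (Finset.mem_range.2 (Nat.succ_pos k)) ht0
      intro i hi
      have hik : i ≤ k := by
        have := Finset.mem_range.1 hi; omega
      rcases Nat.eq_zero_or_pos i with h | h
      · rw [h, ht0]
      · by_cases hit : i ≤ t
        · rw [hti i h hit]
          have hle : a 0 ≤ a i + (t:ℤ) - (i:ℤ) := hQ i h hit hik
          exact_mod_cast hle
        · rw [httop i (by omega)]; exact le_top
    refine ⟨S, ⟨0, h0S⟩, 0, Finset.mem_range.2 (Nat.succ_pos k), j,
      Finset.mem_range.2 (by omega), by omega, ?_, ?_⟩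
    · rw [ht0, hminv]
    · rw [hti j hj1 hjt, hjeq, hminv]
  · -- solution at infinity
    right
    push_neg at hA
    obtain ⟨i1, hi1mem, hmax⟩ := Finset.exists_max_image (Finset.Icc 1 k)
      (fun i => a i - (i : ℤ)) ⟨1, Finset.mem_Icc.2 ⟨le_rfl, hk⟩⟩
    obtain ⟨hi11, hi1k⟩ := Finset.mem_Icc.1 hi1mem
    have hM1 : a 1 - 1 ≤ a i1 - (i1:ℤ) := hmax 1 (Finset.mem_Icc.2 ⟨le_rfl, hk⟩)
    have hM0 : a 0 ≤ a i1 - (i1:ℤ) := by omega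
    by_cases hMeq : a 0 = a i1 - (i1 : ℤ)
    · -- S = {-1}
      set S : Set ℤ := {-1} with hS
      have hmem : (-1 : ℤ) ∈ S := rfl
      have hv0 : tvalInf S 0 = (((-1 : ℤ) : ℝ) : EReal) := by
        apply tvalInf_zero S (-1) hmem
        intro s hs
        simp only [hS, Set.mem_singleton_iff] at hs
        omega
      have hvi : ∀ i : ℕ, i ≠ 0 →
          tvalInf S i = ((((-1:ℤ) : ℝ) : EReal) - (((i : ℝ)) : EReal)) := by
        intro i hi
        exact tvalInf_pos S i hi (-1) hmem le_rfl
          (fun s hs _ => by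
            simp only [hS, Set.mem_singleton_iff] at hs
            omega)
      have ht0 : ttermInf a S 0 = (((a 0 - 1 : ℤ) : ℝ) : EReal) := by
        rw [ttermInf, hv0, ← EReal.coe_add]
        congr 1
        push_cast
        ring
      have hti : ∀ i : ℕ, i ≠ 0 →
          ttermInf a S i = (((a i - 1 - (i:ℤ) : ℤ) : ℝ) : EReal) := by
        intro i hi
        rw [ttermInf, hvi i hi, ← EReal.coe_sub, ← EReal.coe_add]
        congr 1
        push_cast
        ring
      have hmaxv : tmax k a S = (((a 0 - 1 : ℤ) : ℝ) : EReal) := by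
        apply tmax_eq 0 (Finset.mem_range.2 (Nat.succ_pos k)) ht0
        intro i hi
        have hik : i ≤ k := by
          have := Finset.mem_range.1 hi; omega
        rcases Nat.eq_zero_or_pos i with h | h
        · rw [h, ht0]
        · rw [hti i (by omega)]
          have hle : a i - 1 - (i:ℤ) ≤ a 0 - 1 := by
            have := hmax i (Finset.mem_Icc.2 ⟨h, hik⟩)
            omega
          exact_mod_cast hle
      have heq1 : a i1 - 1 - (i1:ℤ) = a 0 - 1 := by omega
      refine ⟨S, ⟨-1, hmem⟩, ?_, 0, Finset.mem_range.2 (Nat.succ_pos k), i1,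
        Finset.mem_range.2 (by omega), by omega, ?_, ?_⟩
      · intro s hs
        simp only [hS, Set.mem_singleton_iff] at hs
        omega
      · rw [ht0, hmaxv]
      · rw [hti i1 (by omega), heq1, hmaxv]
    · -- S = {c, 0}
      set c : ℤ := a 0 - (a i1 - (i1:ℤ)) with hcdef
      have hc : c ≤ -1 := by omega
      set S : Set ℤ := {c, 0} with hS
      have hcS : c ∈ S := Or.inl rfl
      have h0S : (0 : ℤ) ∈ S := Or.inr rfl
      have hv0 : tvalInf S 0 = (((0 : ℤ) : ℝ) : EReal) := by
        apply tvalInf_zero S 0 h0S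
        intro s hs
        simp only [hS, Set.mem_insert_iff, Set.mem_singleton_iff] at hs
        rcases hs with h | h <;> omega
      have hvi : ∀ i : ℕ, i ≠ 0 →
          tvalInf S i = (((c : ℝ) : EReal) - (((i : ℝ)) : EReal)) := by
        intro i hi
        exact tvalInf_pos S i hi c hcS hc
          (fun s hs h1 => by
            simp only [hS, Set.mem_insert_iff, Set.mem_singleton_iff] at hs
            rcases hs with h | h <;> omega)
      have ht0 : ttermInf a S 0 = (((a 0 : ℤ) : ℝ) : EReal) := by
        rw [ttermInf, hv0, ← EReal.coe_add]
        congr 1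
        push_cast
        ring
      have hti : ∀ i : ℕ, i ≠ 0 →
          ttermInf a S i = (((a i + c - (i:ℤ) : ℤ) : ℝ) : EReal) := by
        intro i hi
        rw [ttermInf, hvi i hi, ← EReal.coe_sub, ← EReal.coe_add]
        congr 1
        push_cast
        ring
      have hmaxv : tmax k a S = (((a 0 : ℤ) : ℝ) : EReal) := by
        apply tmax_eq 0 (Finset.mem_range.2 (Nat.succ_pos k)) ht0
        intro i hi
        have hik : i ≤ k := by
          have := Finset.mem_range.1 hi; omega
        rcases Nat.eq_zero_or_pos i with h | h
        · rw [h, ht0]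
        · rw [hti i (by omega)]
          have hle : a i + c - (i:ℤ) ≤ a 0 := by
            have := hmax i (Finset.mem_Icc.2 ⟨h, hik⟩)
            omega
          exact_mod_cast hle
      have heq1 : a i1 + c - (i1:ℤ) = a 0 := by omega
      refine ⟨S, ⟨0, h0S⟩, ?_, 0, Finset.mem_range.2 (Nat.succ_pos k), i1,
        Finset.mem_range.2 (by omega), by omega, ?_, ?_⟩
      · intro s hs
        simp only [hS, Set.mem_insert_iff, Set.mem_singleton_iff] at hs
        rcases hs with h | h <;> omega
      · rw [ht0, hmaxv]
      · rw [hti i1 (by omega), heq1, hmaxv]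
end

section
/- Any system of m tropical linear differential equations in n unknowns with m < n is non-holonomic: it has infinitely many minimal solutions. -/
/-- The term `a_{i,j} + val_{S_j}(i)` with integer coefficients. -/
noncomputable def ttermZ (a : ℕ → ℤ) (S : Set ℕ) (i : ℕ) : EReal :=
  ((a i : ℝ) : EReal) + tval S i

/-- `trop_{P}(S) = min_{1 ≤ j ≤ n, 0 ≤ i ≤ k_j} { a_{i,j} + val_{S_j}(i) }`. -/
noncomputable def tminZ (n : ℕ) (k : Fin n → ℕ) (a : Fin n → ℕ → ℤ)
    (S : Fin n → Set ℕ) : EReal :=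
  ⨅ j : Fin n, ⨅ i ∈ Finset.range (k j + 1), ttermZ (a j) (S j) i

/-- `S` is a solution of one TLDE in `n` unknowns: the minimum equals `∞` or is
attained at least twice. -/
def IsSolZ (n : ℕ) (k : Fin n → ℕ) (a : Fin n → ℕ → ℤ)
    (S : Fin n → Set ℕ) : Prop :=
  tminZ n k a S = ⊤ ∨
    ∃ j : Fin n, ∃ i ∈ Finset.range (k j + 1),
      ∃ j' : Fin n, ∃ i' ∈ Finset.range (k j' + 1), (j, i) ≠ (j', i') ∧
        ttermZ (a j) (S j) i = tminZ n k a S ∧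
        ttermZ (a j') (S j') i' = tminZ n k a S

/-- `S` is a minimal (nonzero) solution of the system of `m` TLDEs in `n`
unknowns. -/
def IsMinSolSys (n m : ℕ) (k : Fin n → ℕ) (a : Fin m → Fin n → ℕ → ℤ)
    (S : Fin n → Set ℕ) : Prop :=
  S ≠ (fun _ => (∅ : Set ℕ)) ∧ (∀ l : Fin m, IsSolZ n k (a l) S) ∧
    ∀ T : Fin n → Set ℕ, (∀ j, T j ⊆ S j) → T ≠ (fun _ => (∅ : Set ℕ)) →
      (∀ l : Fin m, IsSolZ n k (a l) T) → T = S

/-- Auxiliary: any system of `m < n` tropical homogeneous linear equations in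
`n` unknowns has a solution, constructed by a tropical Cramer rule. -/
lemma trop_key (m n : ℕ) (hmn : m < n) (c : Fin m → Fin n → ℤ) :
    ∃ q : Fin n → ℤ, ∀ l : Fin m, ∃ j j' : Fin n, j ≠ j' ∧
      c l j + q j = c l j' + q j' ∧ ∀ j₂, c l j + q j ≤ c l j₂ + q j₂ := by
  classical
  obtain ⟨n', rfl⟩ : ∃ n', n = n' + 1 := ⟨n - 1, by omega⟩
  have hm' : m ≤ n' := by omega
  set P : Fin (n' + 1) → Finset (Fin m → Fin (n' + 1)) := fun j =>
    Finset.univ.filter (fun π => Function.Injective π ∧ ∀ l, π l ≠ j) with hP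
  have hPne : ∀ j, (P j).Nonempty := by
    intro j
    refine ⟨fun l => j.succAbove (Fin.castLE hm' l), ?_⟩
    rw [hP, Finset.mem_filter]
    refine ⟨Finset.mem_univ _, ?_, fun l => Fin.succAbove_ne j _⟩
    exact (Fin.succAbove_right_injective).comp (Fin.castLE_injective hm')
  set q : Fin (n' + 1) → ℤ := fun j => (P j).inf' (hPne j) (fun π => ∑ l, c l (π l)) with hqdef
  have hq_le : ∀ j π, π ∈ P j → q j ≤ ∑ l', c l' (π l') := fun j π h => Finset.inf'_le _ h
  have hq_ex : ∀ j, ∃ π ∈ P j, q j = ∑ l', c l' (π l') := fun j =>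
    Finset.exists_mem_eq_inf' (hPne j) _
  refine ⟨q, fun l => ?_⟩
  set F : Finset (Fin (n' + 1) × (Fin m → Fin (n' + 1))) :=
    Finset.univ.filter (fun p => Function.Injective p.2 ∧ ∀ l', p.2 l' ≠ p.1) with hF
  have hmemF : ∀ p, p ∈ F ↔ Function.Injective p.2 ∧ ∀ l', p.2 l' ≠ p.1 := by
    intro p; rw [hF, Finset.mem_filter]; simp
  have hmemP : ∀ j π, π ∈ P j ↔ Function.Injective π ∧ ∀ l', π l' ≠ j := by
    intro j π; rw [hP, Finset.mem_filter]; simp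
  have hFne : F.Nonempty := by
    obtain ⟨π, hπ⟩ := hPne 0
    exact ⟨(0, π), (hmemF _).2 ((hmemP _ _).1 hπ)⟩
  set w : Fin (n' + 1) × (Fin m → Fin (n' + 1)) → ℤ :=
    fun p => c l p.1 + ∑ l', c l' (p.2 l') with hw
  obtain ⟨p₀, hp₀F, hp₀min⟩ := Finset.exists_min_image F w hFne
  obtain ⟨hinj, havoid⟩ := (hmemF p₀).1 hp₀F
  set j := p₀.1
  set π := p₀.2
  have hmin_all : ∀ j₂, w p₀ ≤ c l j₂ + q j₂ := by
    intro j₂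
    obtain ⟨π₂, hπ₂, hq₂⟩ := hq_ex j₂
    have : (j₂, π₂) ∈ F := (hmemF _).2 ((hmemP _ _).1 hπ₂)
    have := hp₀min _ this
    rw [hq₂]
    exact this
  have hπinP : π ∈ P j := (hmemP _ _).2 ⟨hinj, havoid⟩
  have hwp₀ : w p₀ = c l j + ∑ l', c l' (π l') := rfl
  have hj : c l j + q j = w p₀ := by
    refine le_antisymm ?_ (hmin_all j)
    have := hq_le j π hπinP
    omega
  -- swap row `l` to the missing column `j`
  set π' : Fin m → Fin (n' + 1) := Function.update π l j with hπ'
  have hπ'inj : Function.Injective π' := by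
    intro x y hxy
    rw [hπ'] at hxy
    by_cases hx : x = l <;> by_cases hy : y = l
    · rw [hx, hy]
    · subst hx
      rw [Function.update_self, Function.update_of_ne hy] at hxy
      exact absurd hxy.symm (havoid y)
    · subst hy
      rw [Function.update_self, Function.update_of_ne hx] at hxy
      exact absurd hxy (havoid x)
    · rw [Function.update_of_ne hx, Function.update_of_ne hy] at hxy
      exact hinj hxy
  have hπ'avoid : ∀ l'', π' l'' ≠ π l := by
    intro l''
    rcases eq_or_ne l'' l with rfl | hne
    · rw [hπ', Function.update_self]; exact (havoid l'').symm
    · rw [hπ', Function.update_of_ne hne]; exact fun h => hne (hinj h)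
  have hp'F : (π l, π') ∈ F := (hmemF _).2 ⟨hπ'inj, hπ'avoid⟩
  have hsum : ∑ l', c l' (π' l') = c l j + ∑ l' ∈ ({l}ᶜ : Finset (Fin m)), c l' (π l') := by
    rw [Fintype.sum_eq_add_sum_compl l (fun l' => c l' (π' l'))]
    congr 1
    · rw [hπ', Function.update_self]
    · refine Finset.sum_congr rfl (fun x hx => ?_)
      have hxl : x ≠ l := by simpa using hx
      rw [hπ', Function.update_of_ne hxl]
  have hsum₀ : ∑ l', c l' (π l') = c l (π l) + ∑ l' ∈ ({l}ᶜ : Finset (Fin m)), c l' (π l') :=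
    Fintype.sum_eq_add_sum_compl l _
  have hwp' : w (π l, π') = c l (π l) + ∑ l', c l' (π' l') := rfl
  have hww : w (π l, π') = w p₀ := by
    rw [hwp', hwp₀, hsum, hsum₀]
    ring
  have hj' : c l (π l) + q (π l) = w p₀ := by
    refine le_antisymm ?_ (hmin_all (π l))
    have h1 := hq_le (π l) π' ((hmemP _ _).2 ⟨hπ'inj, hπ'avoid⟩)
    omega
  exact ⟨j, π l, (havoid l).symm, by omega, fun j₂ => by have := hmin_all j₂; omega⟩

lemma tval_singleton (s i : ℕ) (h : i ≤ s) :
    tval {s} i = (((s - i : ℕ) : ℝ) : EReal) := by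
  apply le_antisymm
  · refine iInf_le_of_le (s - i) ?_
    refine iInf_le_of_le ?_ le_rfl
    simp only [Set.mem_singleton_iff]
    omega
  · refine le_iInf fun d => le_iInf fun hd => ?_
    simp only [Set.mem_singleton_iff] at hd
    have : d = s - i := by omega
    rw [this]

lemma tterm_singleton_s16 (aa : ℕ → ℤ) (s i : ℕ) (h : i ≤ s) :
    ttermZ aa {s} i = (((aa i + s - i : ℤ) : ℝ) : EReal) := by
  rw [ttermZ, tval_singleton s i h, ← EReal.coe_add]
  congr 1
  push_cast [h]
  ring

/-- any system of `m < n` TLDEs in `n` unknowns has infinitely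
many minimal solutions. -/
theorem stmt16 (n m : ℕ) (hmn : m < n) (k : Fin n → ℕ) (hk : ∀ j, 1 ≤ k j)
    (a : Fin m → Fin n → ℕ → ℤ) :
    {S : Fin n → Set ℕ | IsMinSolSys n m k a S}.Infinite := by
  classical
  have hn0 : 0 < n := by omega
  set c : Fin m → Fin n → ℤ := fun l j =>
    (Finset.range (k j + 1)).inf' ⟨0, by simp⟩ (fun i => a l j i - i) with hc
  obtain ⟨q, hq⟩ := trop_key m n hmn c
  obtain ⟨B, hB⟩ : ∃ B : ℕ, ∀ j, (k j : ℤ) ≤ q j + B := by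
    refine ⟨Finset.univ.sup (fun j => ((k j : ℤ) - q j).toNat), fun j => ?_⟩
    have h1 : ((k j : ℤ) - q j).toNat ≤ Finset.univ.sup (fun j => ((k j : ℤ) - q j).toNat) :=
      Finset.le_sup (f := fun j => ((k j : ℤ) - q j).toNat) (Finset.mem_univ j)
    have h2 := Int.self_le_toNat ((k j : ℤ) - q j)
    omega
  set s : ℕ → Fin n → ℕ := fun b j => (q j + (B + b)).toNat with hsdef
  have hs : ∀ b j, (s b j : ℤ) = q j + (B + b) := by
    intro b j
    have h1 := hB j
    have h2 := hk j
    simp only [hsdef]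
    omega
  have hks : ∀ b j, k j ≤ s b j := by
    intro b j
    have h1 := hB j
    have h2 := hs b j
    omega
  set S : ℕ → Fin n → Set ℕ := fun b j => {s b j} with hSdef
  have hc_le : ∀ l j i, i ∈ Finset.range (k j + 1) → c l j ≤ a l j i - i :=
    fun l j i hi => Finset.inf'_le _ hi
  have hc_ex : ∀ l j, ∃ i ∈ Finset.range (k j + 1), c l j = a l j i - i :=
    fun l j => Finset.exists_mem_eq_inf' _ _
  have hterm : ∀ b l j i, i ∈ Finset.range (k j + 1) →
      ttermZ (a l j) (S b j) i = (((a l j i + (s b j : ℤ) - (i : ℤ) : ℤ) : ℝ) : EReal) := by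
    intro b l j i hi
    have hi' : i ≤ s b j := by
      rw [Finset.mem_range] at hi
      have := hks b j
      omega
    exact tterm_singleton_s16 _ _ _ hi'
  -- every `S b` is a solution of the whole system
  have hsol : ∀ b l, IsSolZ n k (a l) (S b) := by
    intro b l
    obtain ⟨j, j', hne, heq, hmin'⟩ := hq l
    obtain ⟨i₁, hi₁, hci₁⟩ := hc_ex l j
    obtain ⟨i₂, hi₂, hci₂⟩ := hc_ex l j'
    set v : ℤ := c l j + q j + (B + b) with hv
    have hvmin : tminZ n k (a l) (S b) = ((v : ℝ) : EReal) := by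
      rw [tminZ]
      apply le_antisymm
      · refine iInf_le_of_le j ?_
        refine iInf_le_of_le i₁ ?_
        refine iInf_le_of_le hi₁ ?_
        rw [hterm b l j i₁ hi₁]
        have hxv : (a l j i₁ + (s b j : ℤ) - (i₁ : ℤ)) = v := by
          have := hs b j
          omega
        rw [hxv]
      · refine le_iInf fun j₂ => le_iInf fun i => le_iInf fun hi => ?_
        rw [hterm b l j₂ i hi]
        have h1 : v ≤ a l j₂ i + (s b j₂ : ℤ) - (i : ℤ) := by
          have h2 := hc_le l j₂ i hi
          have h3 := hmin' j₂
          have h4 := hs b j₂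
          omega
        exact_mod_cast h1
    right
    refine ⟨j, i₁, hi₁, j', i₂, hi₂, ?_, ?_, ?_⟩
    · intro hcontra
      exact hne (congrArg Prod.fst hcontra)
    · rw [hterm b l j i₁ hi₁, hvmin]
      have hxv : (a l j i₁ + (s b j : ℤ) - (i₁ : ℤ)) = v := by
        have := hs b j
        omega
      rw [hxv]
    · rw [hterm b l j' i₂ hi₂, hvmin]
      have hxv : (a l j' i₂ + (s b j' : ℤ) - (i₂ : ℤ)) = v := by
        have h1 := hs b j'
        omega
      rw [hxv]
  -- each `S b` contains a minimal solution
  have hexmin : ∀ b, ∃ T : Fin n → Set ℕ, IsMinSolSys n m k a T ∧ ∀ j, T j ⊆ S b j := by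
    intro b
    set 𝒮 : Set (Fin n → Set ℕ) :=
      {T | (∀ j, T j ⊆ S b j) ∧ T ≠ (fun _ => ∅) ∧ ∀ l, IsSolZ n k (a l) T} with h𝒮
    have hSb𝒮 : S b ∈ 𝒮 := by
      refine ⟨fun j => subset_rfl, ?_, hsol b⟩
      intro hcontra
      have := congrFun hcontra ⟨0, hn0⟩
      simp only [hSdef] at this
      exact Set.singleton_ne_empty _ this
    set supp : (Fin n → Set ℕ) → ℕ :=
      fun T => (Finset.univ.filter fun j => (T j).Nonempty).card with hsupp
    obtain ⟨d, hd, hdmin⟩ := wellFounded_lt.has_min (supp '' 𝒮) ⟨supp (S b), S b, hSb𝒮, rfl⟩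
    obtain ⟨T, hT𝒮, hTd⟩ := hd
    refine ⟨T, ⟨hT𝒮.2.1, hT𝒮.2.2, ?_⟩, hT𝒮.1⟩
    intro T' hsub hne' hsol'
    by_contra hTT
    have hT'𝒮 : T' ∈ 𝒮 := ⟨fun j => (hsub j).trans (hT𝒮.1 j), hne', hsol'⟩
    obtain ⟨j₀, hj₀⟩ := Function.ne_iff.1 hTT
    have hTj₀ : T j₀ ⊆ {s b j₀} := hT𝒮.1 j₀
    have hT'j₀sub : T' j₀ ⊆ {s b j₀} := (hsub j₀).trans hTj₀
    have hcases : T' j₀ = ∅ ∧ (T j₀).Nonempty := by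
      rcases Set.subset_singleton_iff_eq.1 hTj₀ with h | h
      · exfalso
        exact hj₀ (Set.subset_eq_empty (hsub j₀) (by rw [h]) ▸ h ▸ rfl)
      · rcases Set.subset_singleton_iff_eq.1 hT'j₀sub with h' | h'
        · exact ⟨h', by rw [h]; exact Set.singleton_nonempty _⟩
        · exact absurd (h'.trans h.symm) hj₀
    have hlt : supp T' < supp T := by
      apply Finset.card_lt_card
      rw [Finset.ssubset_iff_of_subset]
      · refine ⟨j₀, ?_, ?_⟩
        · simp only [Finset.mem_filter]
          exact ⟨Finset.mem_univ _, hcases.2⟩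
        · simp only [Finset.mem_filter, hcases.1]
          simp
      · refine Finset.monotone_filter_right _ ?_
        intro j _ hj
        exact hj.mono (hsub j)
    exact hdmin (supp T') ⟨T', hT'𝒮, rfl⟩ (hTd ▸ hlt)
  choose T hTmin hTsub using hexmin
  refine Set.infinite_of_injective_forall_mem (f := T) ?_ (fun b => hTmin b)
  intro b1 b2 hbb
  obtain ⟨j₁, hj₁⟩ := Function.ne_iff.1 (hTmin b1).1
  obtain ⟨x, hx⟩ := Set.nonempty_iff_ne_empty.2 hj₁
  have h1 : x ∈ S b1 j₁ := hTsub b1 j₁ hx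
  have h2 : x ∈ S b2 j₁ := hTsub b2 j₁ (by rw [← hbb]; exact hx)
  simp only [hSdef, Set.mem_singleton_iff] at h1 h2
  have e1 := hs b1 j₁
  have e2 := hs b2 j₁
  omega
end
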